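/- Let ε ∈ (0,1], assume max_{j∈J} p_j > 0 (so C > 0), and let β be a partition of J into M (possibly empty) bags such that every bag has size p(B) ≤ 4C. Then ∑_{ℓ∈L} M̂_ℓ + M̂_sand ≤ M, and there exists a partition of J into ∑_{ℓ∈L} M̂_ℓ + M̂_sand bags consisting of, for each ℓ ∈ L, exactly M̂_ℓ bags each of total job size at most (1+ε)^{ℓ+1}, together with M̂_sand bags each of total job size at most (1+ε)·εC. -/

import Mathlib

open scoped BigOperators

attribute [local instance] Classical.propDecidable

/-- The size of bag `b` for the partition `β` of the jobs into bags. -/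
noncomputable def bagSize {n : ℕ} {ι : Type*} (p : Fin n → ℝ) (β : Fin n → ι) (b : ι) : ℝ :=
  ∑ j : Fin n, if β j = b then p j else 0

/-- The quantity `C = ∑_{m=1}^M q_m · max (max_j p_j) ((∑_j p_j)/m)`,
where scenario `i : Fin M` corresponds to `m = i+1` machines. -/
noncomputable def Cval {n M : ℕ} (p : Fin n → ℝ) (q : Fin M → ℝ) : ℝ :=
  ∑ i : Fin M, q i * max (⨆ j : Fin n, p j) ((∑ j : Fin n, p j) / ((i.1 + 1 : ℕ) : ℝ))

/-- A bag `b` of `β` is regular if its size is at least `εC` or it packs a job of size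
at least `ε²C`. -/
def Regular {n M : ℕ} (ε C : ℝ) (p : Fin n → ℝ) (β : Fin n → Fin M) (b : Fin M) : Prop :=
  ε * C ≤ bagSize p β b ∨ ∃ j, β j = b ∧ ε ^ 2 * C ≤ p j

/-- `L = {⌊log_{1+ε}(ε²C)⌋, …, ⌈log_{1+ε}(4C)⌉}`. -/
noncomputable def Lset (ε C : ℝ) : Finset ℤ :=
  Finset.Icc ⌊Real.log (ε ^ 2 * C) / Real.log (1 + ε)⌋ ⌈Real.log (4 * C) / Real.log (1 + ε)⌉

/-- `M̂_ℓ`: the number of regular bags of `β` with size in `[(1+ε)^ℓ, (1+ε)^{ℓ+1})`. -/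
noncomputable def Mhat {n M : ℕ} (ε C : ℝ) (p : Fin n → ℝ) (β : Fin n → Fin M) (ℓ : ℤ) : ℕ :=
  (Finset.univ.filter (fun b : Fin M =>
    Regular ε C p β b ∧ (1 + ε) ^ ℓ ≤ bagSize p β b ∧ bagSize p β b < (1 + ε) ^ (ℓ + 1))).card

/-- `M̂_sand = ⌈(total size of non-regular bags)/(εC)⌉`. -/
noncomputable def Msand {n M : ℕ} (ε C : ℝ) (p : Fin n → ℝ) (β : Fin n → Fin M) : ℕ :=
  ⌈(∑ b : Fin M, if ¬ Regular ε C p β b then bagSize p β b else 0) / (ε * C)⌉₊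

/-- Index type for a collection of bags consisting of exactly `M̂_ℓ` bags for each `ℓ ∈ L`
together with `M̂_sand` sand bags. -/
def BagIdx {n M : ℕ} (ε C : ℝ) (p : Fin n → ℝ) (β : Fin n → Fin M) : Type :=
  (Σ ℓ : (Lset ε C), Fin (Mhat ε C p β ℓ.1)) ⊕ Fin (Msand ε C p β)

noncomputable instance {n M : ℕ} (ε C : ℝ) (p : Fin n → ℝ) (β : Fin n → Fin M) :
    Fintype (BagIdx ε C p β) := by
  unfold BagIdx; infer_instance

section Helpers

variable {n M : ℕ}

lemma bagSize_nonneg (p : Fin n → ℝ) (hp : ∀ j, 0 ≤ p j) (β : Fin n → Fin M) (b : Fin M) :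
    0 ≤ bagSize p β b := by
  rw [bagSize]
  exact Finset.sum_nonneg fun j _ => by by_cases hj : β j = b <;> simp [hj, hp j]

lemma le_bagSize (p : Fin n → ℝ) (hp : ∀ j, 0 ≤ p j) (β : Fin n → Fin M) {b : Fin M}
    {j : Fin n} (h : β j = b) : p j ≤ bagSize p β b := by
  rw [bagSize]
  refine le_trans ?_ (Finset.single_le_sum (fun j' _ => ?_) (Finset.mem_univ j))
  · exact le_of_eq (if_pos h).symm
  · by_cases hj : β j' = b <;> simp [hj, hp j']

lemma zpow_le_iff_le_logb {b s : ℝ} (hb : 1 < b) (hs : 0 < s) (ℓ : ℤ) :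
    b ^ ℓ ≤ s ↔ (ℓ : ℝ) ≤ Real.logb b s := by
  rw [Real.le_logb_iff_rpow_le hb hs, Real.rpow_intCast]

lemma lt_zpow_iff_logb_lt {b s : ℝ} (hb : 1 < b) (hs : 0 < s) (ℓ : ℤ) :
    s < b ^ ℓ ↔ Real.logb b s < (ℓ : ℝ) := by
  rw [Real.logb_lt_iff_lt_rpow hb hs, Real.rpow_intCast]

end Helpers

section Helpers2

variable {n M : ℕ}

lemma Cpos (p : Fin n → ℝ) (hpmax : 0 < ⨆ j : Fin n, p j)
    (q : Fin M → ℝ) (hq : ∀ i, 0 ≤ q i) (hq1 : ∑ i, q i = 1) : 0 < Cval p q := by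
  have h1 : (⨆ j : Fin n, p j) = ∑ i : Fin M, q i * (⨆ j : Fin n, p j) := by
    rw [← Finset.sum_mul, hq1, one_mul]
  calc (0:ℝ) < ⨆ j : Fin n, p j := hpmax
    _ = ∑ i : Fin M, q i * (⨆ j : Fin n, p j) := h1
    _ ≤ Cval p q := Finset.sum_le_sum fun i _ =>
        mul_le_mul_of_nonneg_left (le_max_left _ _) (hq i)

lemma sand_sum_eq (ε C : ℝ) (p : Fin n → ℝ) (β : Fin n → Fin M) :
    (∑ b : Fin M, if ¬ Regular ε C p β b then bagSize p β b else 0)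
      = ∑ j : Fin n, if ¬ Regular ε C p β (β j) then p j else 0 := by
  have h1 : ∀ b : Fin M, (if ¬ Regular ε C p β b then bagSize p β b else 0)
      = ∑ j : Fin n, if ¬ Regular ε C p β b then (if β j = b then p j else 0) else 0 := by
    intro b
    by_cases h : Regular ε C p β b <;> simp [h, bagSize]
    exact Finset.sum_congr rfl fun x _ => by congr!
  calc (∑ b : Fin M, if ¬ Regular ε C p β b then bagSize p β b else 0)
      = ∑ b : Fin M, ∑ j : Fin n,
          (if ¬ Regular ε C p β b then (if β j = b then p j else 0) else 0) :=
        Finset.sum_congr rfl fun b _ => h1 b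
    _ = ∑ j : Fin n, ∑ b : Fin M,
          (if ¬ Regular ε C p β b then (if β j = b then p j else 0) else 0) :=
        Finset.sum_comm
    _ = ∑ j : Fin n, if ¬ Regular ε C p β (β j) then p j else 0 := by
        refine Finset.sum_congr rfl fun j _ => ?_
        rw [Finset.sum_eq_single (β j)]
        · simp
        · intro b _ hb
          have : β j ≠ b := fun h => hb (h.symm)
          simp [this]
        · simp

lemma nonreg_job_small {ε C : ℝ} {p : Fin n → ℝ} {β : Fin n → Fin M} {j : Fin n}
    (h : ¬ Regular ε C p β (β j)) : p j < ε ^ 2 * C := by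
  rw [Regular, not_or] at h
  obtain ⟨-, h2⟩ := h
  push_neg at h2
  exact h2 j rfl

lemma regular_mem {ε C : ℝ} (hε0 : 0 < ε) (hε1 : ε ≤ 1) (hC : 0 < C)
    {p : Fin n → ℝ} (hp : ∀ j, 0 ≤ p j) {β : Fin n → Fin M} {b : Fin M}
    (hb : Regular ε C p β b) (hub : bagSize p β b ≤ 4 * C) :
    ⌊Real.logb (1+ε) (bagSize p β b)⌋ ∈ Lset ε C ∧
    (1+ε) ^ ⌊Real.logb (1+ε) (bagSize p β b)⌋ ≤ bagSize p β b ∧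
    bagSize p β b < (1+ε) ^ (⌊Real.logb (1+ε) (bagSize p β b)⌋ + 1) := by
  set s := bagSize p β b with hs
  have hb1 : (1:ℝ) < 1 + ε := by linarith
  have hlb : ε ^ 2 * C ≤ s := by
    rcases hb with h | ⟨j, hj, hjp⟩
    · rw [← hs] at h
      nlinarith [mul_nonneg (mul_nonneg hε0.le (sub_nonneg.2 hε1)) hC.le]
    · exact le_trans hjp (le_bagSize p hp β hj)
  have hspos : 0 < s := lt_of_lt_of_le (by positivity) hlb
  have he2C : (0:ℝ) < ε ^ 2 * C := by positivity
  have h4C : (0:ℝ) < 4 * C := by linarith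
  refine ⟨?_, (zpow_le_iff_le_logb hb1 hspos _).2 (Int.floor_le _),
    (lt_zpow_iff_logb_lt hb1 hspos _).2 (by push_cast; exact Int.lt_floor_add_one _)⟩
  have hLdef : Lset ε C = Finset.Icc ⌊Real.logb (1+ε) (ε ^ 2 * C)⌋ ⌈Real.logb (1+ε) (4 * C)⌉ := by
    simp [Lset, Real.logb]
  rw [hLdef, Finset.mem_Icc]
  constructor
  · exact Int.floor_le_floor (Real.logb_le_logb_of_le hb1 he2C hlb)
  · have : Real.logb (1+ε) s ≤ (⌈Real.logb (1+ε) (4 * C)⌉ : ℝ) :=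
      le_trans (Real.logb_le_logb_of_le hb1 hspos hub) (Int.le_ceil _)
    exact_mod_cast le_trans (Int.floor_le _) this

end Helpers2

/-- the guess `M̂` is feasible: `∑_{ℓ∈L} M̂_ℓ + M̂_sand ≤ M`, and the jobs can be
partitioned into `M̂_ℓ` bags of size at most `(1+ε)^{ℓ+1}` for each `ℓ ∈ L` together with
`M̂_sand` bags of size at most `(1+ε)·εC`. -/
theorem stmt2 (n M : ℕ) (hM : 1 ≤ M) (ε : ℝ) (hε0 : 0 < ε) (hε1 : ε ≤ 1)
    (p : Fin n → ℝ) (hp : ∀ j, 0 ≤ p j) (hpmax : 0 < ⨆ j : Fin n, p j)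
    (q : Fin M → ℝ) (hq : ∀ i, 0 ≤ q i) (hq1 : ∑ i, q i = 1)
    (β : Fin n → Fin M) (hβ : ∀ b, bagSize p β b ≤ 4 * Cval p q) :
    ((∑ ℓ ∈ Lset ε (Cval p q), Mhat ε (Cval p q) p β ℓ) + Msand ε (Cval p q) p β ≤ M) ∧
    ∃ γ : Fin n → BagIdx ε (Cval p q) p β,
      (∀ (ℓ : (Lset ε (Cval p q))) (i : Fin (Mhat ε (Cval p q) p β ℓ.1)),
        bagSize p γ (Sum.inl ⟨ℓ, i⟩) ≤ (1 + ε) ^ ((ℓ.1 : ℤ) + 1)) ∧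
      (∀ i : Fin (Msand ε (Cval p q) p β),
        bagSize p γ (Sum.inr i) ≤ (1 + ε) * ε * Cval p q) := by
  set C := Cval p q with hCdef
  have hC : 0 < C := Cpos p hpmax q hq hq1
  have hb1 : (1:ℝ) < 1 + ε := by linarith
  have hεC : (0:ℝ) < ε * C := by positivity
  set lf : Fin M → ℤ := fun b => ⌊Real.logb (1+ε) (bagSize p β b)⌋ with hlf
  set R : Finset (Fin M) := Finset.univ.filter (fun b => Regular ε C p β b) with hRdef
  set S : ℤ → Finset (Fin M) := fun ℓ => Finset.univ.filter (fun b =>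
    Regular ε C p β b ∧ (1+ε)^ℓ ≤ bagSize p β b ∧ bagSize p β b < (1+ε)^(ℓ+1)) with hSdef
  have hcardS : ∀ ℓ : ℤ, (S ℓ).card = Mhat ε C p β ℓ := fun ℓ => rfl
  have hmem : ∀ b, Regular ε C p β b → lf b ∈ Lset ε C ∧
      (1+ε)^(lf b) ≤ bagSize p β b ∧ bagSize p β b < (1+ε)^(lf b + 1) :=
    fun b hb => regular_mem hε0 hε1 hC hp hb (hβ b)
  have hSmem : ∀ b, Regular ε C p β b → b ∈ S (lf b) := fun b hb =>
    Finset.mem_filter.2 ⟨Finset.mem_univ _, hb, (hmem b hb).2.1, (hmem b hb).2.2⟩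
  -- the fibers of lf on R are exactly the S ℓ
  have hfiber : ∀ ℓ ∈ Lset ε C, R.filter (fun b => lf b = ℓ) = S ℓ := by
    intro ℓ hℓ
    ext b
    simp only [hRdef, hSdef, Finset.mem_filter, Finset.mem_univ, true_and]
    constructor
    · rintro ⟨hb, hlfb⟩
      exact ⟨hb, hlfb ▸ (hmem b hb).2.1, hlfb ▸ (hmem b hb).2.2⟩
    · rintro ⟨hreg, h1, h2⟩
      refine ⟨hreg, ?_⟩
      have hspos : 0 < bagSize p β b := lt_of_lt_of_le (zpow_pos (by linarith) ℓ) h1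
      have ha := (zpow_le_iff_le_logb hb1 hspos ℓ).1 h1
      have hb2 := (lt_zpow_iff_logb_lt hb1 hspos (ℓ+1)).1 h2
      rw [hlf]
      rw [Int.floor_eq_iff]
      exact ⟨ha, by push_cast at hb2 ⊢; linarith⟩
  have hRcard : R.card = ∑ ℓ ∈ Lset ε C, Mhat ε C p β ℓ := by
    rw [Finset.card_eq_sum_card_fiberwise (f := lf) (t := Lset ε C)
      (fun b hb => (hmem b (Finset.mem_filter.1 hb).2).1)]
    exact Finset.sum_congr rfl fun ℓ hℓ => by rw [hfiber ℓ hℓ, hcardS]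
  -- sand
  set Ssum : ℝ := ∑ b : Fin M, (if ¬ Regular ε C p β b then bagSize p β b else 0) with hSsum
  have hMsanddef : Msand ε C p β = ⌈Ssum / (ε * C)⌉₊ := rfl
  have hSsum_eq : Ssum = ∑ j : Fin n, (if ¬ Regular ε C p β (β j) then p j else 0) :=
    sand_sum_eq ε C p β
  have hMsand_le : Msand ε C p β ≤ (Finset.univ.filter (fun b => ¬ Regular ε C p β b)).card := by
    rw [hMsanddef, Nat.ceil_le, div_le_iff₀ hεC]
    calc Ssum = ∑ b ∈ Finset.univ.filter (fun b => ¬ Regular ε C p β b), bagSize p β b := by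
          rw [hSsum, Finset.sum_filter]
      _ ≤ ∑ b ∈ Finset.univ.filter (fun b => ¬ Regular ε C p β b), ε * C := by
          refine Finset.sum_le_sum fun b hb => ?_
          have hnb := (Finset.mem_filter.1 hb).2
          rw [Regular, not_or] at hnb
          exact le_of_lt (lt_of_not_ge hnb.1)
      _ = ((Finset.univ.filter (fun b => ¬ Regular ε C p β b)).card : ℝ) * (ε * C) := by
          rw [Finset.sum_const, nsmul_eq_mul]
  have part1 : (∑ ℓ ∈ Lset ε C, Mhat ε C p β ℓ) + Msand ε C p β ≤ M := by
    have hsplit := Finset.card_filter_add_card_filter_not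
      (s := (Finset.univ : Finset (Fin M))) (p := fun b => Regular ε C p β b)
    rw [Finset.card_univ, Fintype.card_fin] at hsplit
    rw [← hRcard]
    rw [hRdef] at *
    omega
  refine ⟨part1, ?_⟩
  -- job-level sand quantities
  set T : Finset (Fin n) := Finset.univ.filter (fun j => ¬ Regular ε C p β (β j)) with hTdef
  have hSsum_T : Ssum = ∑ j ∈ T, p j := by rw [hSsum_eq, hTdef, Finset.sum_filter]
  set start : Fin n → ℝ := fun j => ∑ j' ∈ T.filter (fun j' => j' < j), p j' with hstartdef
  have hstart_nonneg : ∀ j, 0 ≤ start j := fun j => Finset.sum_nonneg fun _ _ => hp _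
  have hstart_add : ∀ j ∈ T, start j + p j ≤ Ssum := by
    intro j hj
    rw [hSsum_T]
    have hsub : insert j (T.filter (fun j' => j' < j)) ⊆ T := by
      intro x hx
      rcases Finset.mem_insert.1 hx with rfl | hx
      · exact hj
      · exact (Finset.mem_filter.1 hx).1
    calc start j + p j = ∑ j' ∈ insert j (T.filter (fun j' => j' < j)), p j' := by
          rw [Finset.sum_insert (by simp)]; ring
      _ ≤ ∑ j ∈ T, p j := Finset.sum_le_sum_of_subset_of_nonneg hsub (fun x _ _ => hp x)
  have hidx_lt : ∀ j, j ∈ T → p j ≠ 0 → ⌊start j / (ε*C)⌋₊ < Msand ε C p β := by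
    intro j hj hpj
    have hpj' : 0 < p j := lt_of_le_of_ne (hp j) (Ne.symm hpj)
    have h1 : start j < Ssum := by linarith [hstart_add j hj]
    rw [Nat.floor_lt (div_nonneg (hstart_nonneg j) hεC.le)]
    calc start j / (ε*C) < Ssum / (ε*C) := by gcongr
      _ ≤ ((⌈Ssum / (ε * C)⌉₊ : ℕ) : ℝ) := Nat.le_ceil _
      _ = (Msand ε C p β : ℝ) := by rw [hMsanddef]
  -- a default bag index
  obtain ⟨j0, hj0⟩ : ∃ j, 0 < p j := by
    by_contra h
    push_neg at h
    cases isEmpty_or_nonempty (Fin n) with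
    | inl he => rw [Real.iSup_of_isEmpty] at hpmax; exact lt_irrefl 0 hpmax
    | inr hne => exact absurd (ciSup_le h) (not_le.2 hpmax)
  have hd : Nonempty (BagIdx ε C p β) := by
    by_cases hreg : Regular ε C p β (β j0)
    · exact ⟨Sum.inl ⟨⟨lf (β j0), (hmem _ hreg).1⟩,
        ((S (lf (β j0))).orderIsoOfFin (hcardS _)).symm ⟨β j0, hSmem _ hreg⟩⟩⟩
    · have hj0T : j0 ∈ T := Finset.mem_filter.2 ⟨Finset.mem_univ _, hreg⟩
      have hS0 : 0 < Ssum := lt_of_lt_of_le hj0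
        (by linarith [hstart_add j0 hj0T, hstart_nonneg j0])
      have : 0 < Msand ε C p β := by
        rw [hMsanddef]
        exact Nat.ceil_pos.2 (div_pos hS0 hεC)
      exact ⟨Sum.inr ⟨0, this⟩⟩
  obtain ⟨d⟩ := hd
  set e : ∀ ℓ : ℤ, Fin (Mhat ε C p β ℓ) ≃o {x // x ∈ S ℓ} :=
    fun ℓ => (S ℓ).orderIsoOfFin (hcardS ℓ) with hedef
  set γ : Fin n → BagIdx ε C p β := fun j =>
    if hpj : p j = 0 then d
    else if hr : Regular ε C p β (β j) then
      Sum.inl ⟨⟨lf (β j), (hmem _ hr).1⟩, (e (lf (β j))).symm ⟨β j, hSmem _ hr⟩⟩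
    else Sum.inr ⟨⌊start j / (ε*C)⌋₊,
      hidx_lt j (Finset.mem_filter.2 ⟨Finset.mem_univ _, hr⟩) hpj⟩ with hγdef
  set F : BagIdx ε C p β → Fin M :=
    Sum.elim (fun s => ((e s.1.1) s.2 : {x // x ∈ S s.1.1}).1) (fun _ => β j0) with hFdef
  refine ⟨γ, ?_, ?_⟩
  · -- regular bags
    intro ℓ i
    set b : Fin M := ((e ℓ.1) i : {x // x ∈ S ℓ.1}).1 with hbdef
    have hbS : b ∈ S ℓ.1 := ((e ℓ.1) i).2
    have hbub : bagSize p β b < (1+ε) ^ ((ℓ.1 : ℤ) + 1) := (Finset.mem_filter.1 hbS).2.2.2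
    have hle : bagSize p γ (Sum.inl ⟨ℓ, i⟩) ≤ bagSize p β b := by
      unfold bagSize
      refine Finset.sum_le_sum fun j _ => ?_
      by_cases hγj : γ j = Sum.inl ⟨ℓ, i⟩
      · rw [if_pos hγj]
        by_cases hpj : p j = 0
        · rw [hpj]
          split <;> simp
        · have hr : Regular ε C p β (β j) := by
            by_contra hr
            exact Sum.inl_ne_inr (hγj.symm.trans ((dif_neg hpj).trans (dif_neg hr)))
          have hγj' : γ j = Sum.inl ⟨⟨lf (β j), (hmem _ hr).1⟩,
              (e (lf (β j))).symm ⟨β j, hSmem _ hr⟩⟩ := by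
            exact (dif_neg hpj).trans (dif_pos hr)
          have hFeq := congrArg F (hγj'.symm.trans hγj)
          simp only [hFdef, Sum.elim_inl] at hFeq
          rw [OrderIso.apply_symm_apply] at hFeq
          rw [if_pos hFeq]
      · rw [if_neg hγj]
        by_cases hβj : β j = b <;> simp [hβj, hp j]
    exact le_trans hle (le_of_lt hbub)
  · -- sand bags
    intro i
    have hRHS : (0:ℝ) < (1 + ε) * ε * C := by positivity
    set A : Finset (Fin n) := Finset.univ.filter
      (fun j => γ j = Sum.inr i ∧ p j ≠ 0) with hAdef
    have hA_T : ∀ j ∈ A, j ∈ T ∧ (i : ℝ) * (ε*C) ≤ start j ∧ start j < ((i : ℝ)+1) * (ε*C) := by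
      intro j hj
      obtain ⟨-, hγj, hpj⟩ := Finset.mem_filter.1 hj
      have hr : ¬ Regular ε C p β (β j) := by
        intro hr
        exact Sum.inl_ne_inr (((dif_neg hpj).trans (dif_pos hr)).symm.trans hγj)
      have hjT : j ∈ T := Finset.mem_filter.2 ⟨Finset.mem_univ _, hr⟩
      have hγj' : γ j = Sum.inr ⟨⌊start j / (ε*C)⌋₊, hidx_lt j hjT hpj⟩ := by
        exact (dif_neg hpj).trans (dif_neg hr)
      have hfl : ⌊start j / (ε*C)⌋₊ = (i : ℕ) := by
        have := (hγj'.symm.trans hγj)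
        have h2 := Sum.inr_injective this
        exact congrArg Fin.val h2
      have hfl2 := (Nat.floor_eq_iff (div_nonneg (hstart_nonneg j) hεC.le)).1 hfl
      have hc1 : ((i:ℕ):ℝ) ≤ start j / (ε*C) := hfl2.1
      have hc2 : start j / (ε*C) < ((i:ℕ):ℝ) + 1 := hfl2.2
      refine ⟨hjT, (le_div_iff₀ hεC).1 hc1, (div_lt_iff₀ hεC).1 hc2⟩
    have hstep1 : bagSize p γ (Sum.inr i) ≤ ∑ j ∈ A, p j := by
      unfold bagSize
      rw [hAdef, Finset.sum_filter]
      refine Finset.sum_le_sum fun j _ => ?_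
      by_cases hγj : γ j = Sum.inr i
      · by_cases hpj : p j = 0
        · rw [if_pos hγj, hpj]
          split <;> simp
        · rw [if_pos hγj, if_pos ⟨hγj, hpj⟩]
      · rw [if_neg hγj, if_neg (fun h => hγj h.1)]
    by_cases hAe : A = ∅
    · refine le_trans hstep1 ?_
      rw [hAe, Finset.sum_empty]
      positivity
    have hAne : A.Nonempty := Finset.nonempty_iff_ne_empty.2 hAe
    set jm := A.max' hAne with hjmdef
    set j1 := A.min' hAne with hj1def
    have hjmA : jm ∈ A := A.max'_mem hAne
    have hj1A : j1 ∈ A := A.min'_mem hAne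
    have h12 : j1 ≤ jm := A.min'_le _ hjmA
    have hjmT := (hA_T jm hjmA).1
    have hj1T := (hA_T j1 hj1A).1
    have hsub : A ⊆ T.filter (fun x => j1 ≤ x ∧ x ≤ jm) := fun x hx =>
      Finset.mem_filter.2 ⟨(hA_T x hx).1, A.min'_le x hx, A.le_max' x hx⟩
    have hsum1 : ∑ j ∈ A, p j ≤ ∑ j ∈ T.filter (fun x => j1 ≤ x ∧ x ≤ jm), p j :=
      Finset.sum_le_sum_of_subset_of_nonneg hsub (fun x _ _ => hp x)
    have hins : T.filter (fun x => x ≤ jm) = insert jm (T.filter (fun x => x < jm)) := by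
      ext x
      simp only [Finset.mem_filter, Finset.mem_insert]
      constructor
      · rintro ⟨hxT, hxle⟩
        rcases lt_or_eq_of_le hxle with h | h
        · exact Or.inr ⟨hxT, h⟩
        · exact Or.inl h
      · rintro (rfl | ⟨hxT, hxlt⟩)
        · exact ⟨hjmT, le_refl _⟩
        · exact ⟨hxT, le_of_lt hxlt⟩
    have hsum2 : ∑ j ∈ T.filter (fun x => x ≤ jm), p j = start jm + p jm := by
      rw [hins, Finset.sum_insert (by simp)]
      have h0 : start jm = ∑ j ∈ T.filter (fun j' => j' < jm), p j := rfl
      rw [h0]; ring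
    have hsplit2 : ∑ j ∈ T.filter (fun x => x ≤ jm), p j
        = ∑ j ∈ T.filter (fun x => x < j1), p j
          + ∑ j ∈ T.filter (fun x => j1 ≤ x ∧ x ≤ jm), p j := by
      rw [← Finset.sum_filter_add_sum_filter_not (T.filter (fun x => x ≤ jm))
        (fun x => x < j1)]
      congr 1
      · apply Finset.sum_congr _ (fun _ _ => rfl)
        rw [Finset.filter_filter]
        ext x
        simp only [Finset.mem_filter]
        constructor
        · rintro ⟨hxT, -, h2⟩
          exact ⟨hxT, h2⟩
        · rintro ⟨hxT, h2⟩
          exact ⟨hxT, le_trans (le_of_lt h2) h12, h2⟩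
      · apply Finset.sum_congr _ (fun _ _ => rfl)
        rw [Finset.filter_filter]
        ext x
        simp only [Finset.mem_filter, not_lt]
        constructor
        · rintro ⟨hxT, h1, h2⟩
          exact ⟨hxT, h2, h1⟩
        · rintro ⟨hxT, h1, h2⟩
          exact ⟨hxT, h2, h1⟩
    have hstart_j1 : ∑ j ∈ T.filter (fun x => x < j1), p j = start j1 := rfl
    have hub1 : start jm < ((i:ℝ)+1) * (ε*C) := (hA_T jm hjmA).2.2
    have hlb1 : ((i:ℝ)) * (ε*C) ≤ start j1 := (hA_T j1 hj1A).2.1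
    have hpm : p jm < ε^2 * C := nonreg_job_small ((Finset.mem_filter.1 hjmT).2)
    have hfinal : ∑ j ∈ A, p j ≤ (1+ε) * ε * C := by
      nlinarith [hsum1, hsum2, hsplit2, hstart_j1]
    exact le_trans hstep1 hfinal
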